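/- Let d ≥ 1 be an integer and let ψ₀, ψ₁ : ℝ^d → ℂ be continuous functions that are 2π-periodic in each coordinate, such that {x : ψ₀(x) = 0} = {x : ψ₁(x) = 0} and, for every x with ψ₀(x) ≠ 0, the quotient ψ₁(x)/ψ₀(x) is a strictly positive real number (i.e., ψ₀ and ψ₁ share the same argument). Then for every ε > 0 there exists a continuous, 2π-periodic-in-each-coordinate function φ : ℝ^d → ℝ such that (∫_{[0,2π]^d} |e^{φ(x)} ψ₀(x) − ψ₁(x)|² dx)^{1/2} < ε. -/

import Mathlib

open scoped Real

/-- if `ψ₀, ψ₁ : ℝ^d → ℂ` are continuous, `2π`-periodic in each coordinate,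
have the same zero set, and `ψ₁/ψ₀ > 0` off the zero set (same argument), then for every
`ε > 0` there is a continuous `2π`-periodic function `φ : ℝ^d → ℝ` with
`(∫_{[0,2π]^d} |e^{φ} ψ₀ − ψ₁|²)^{1/2} < ε`. -/
theorem cgl_same_argument_multiplicative_approximation (d : ℕ) (hd : 1 ≤ d)
    (ψ₀ ψ₁ : (Fin d → ℝ) → ℂ) (hψ₀ : Continuous ψ₀) (hψ₁ : Continuous ψ₁)
    (hper₀ : ∀ x : Fin d → ℝ, ∀ i : Fin d, ψ₀ (x + Pi.single i (2 * Real.pi)) = ψ₀ x)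
    (hper₁ : ∀ x : Fin d → ℝ, ∀ i : Fin d, ψ₁ (x + Pi.single i (2 * Real.pi)) = ψ₁ x)
    (hzero : {x : Fin d → ℝ | ψ₀ x = 0} = {x : Fin d → ℝ | ψ₁ x = 0})
    (harg : ∀ x : Fin d → ℝ, ψ₀ x ≠ 0 → ∃ r : ℝ, 0 < r ∧ ψ₁ x = (r : ℂ) * ψ₀ x)
    (ε : ℝ) (hε : 0 < ε) :
    ∃ φ : (Fin d → ℝ) → ℝ, Continuous φ ∧
      (∀ x : Fin d → ℝ, ∀ i : Fin d, φ (x + Pi.single i (2 * Real.pi)) = φ x) ∧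
      (∫ x in Set.univ.pi fun _ : Fin d => Set.Icc (0 : ℝ) (2 * Real.pi),
          ‖Complex.exp ((φ x : ℂ)) * ψ₀ x - ψ₁ x‖ ^ 2) ^ ((1 : ℝ) / 2) < ε := by
  classical
  set box : Set (Fin d → ℝ) := Set.univ.pi fun _ : Fin d => Set.Icc (0 : ℝ) (2 * Real.pi)
  -- the smoothing parameters
  set δ : ℕ → ℝ := fun n => 1 / (n + 1) with hδdef
  have hδpos : ∀ n, 0 < δ n := fun n => by positivity
  have hδle : ∀ n, δ n ≤ 1 := by
    intro n
    rw [hδdef]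
    rw [div_le_one (by positivity)]
    linarith [Nat.cast_nonneg (α := ℝ) n]
  have hδlim : Filter.Tendsto δ Filter.atTop (nhds 0) := tendsto_one_div_add_atTop_nhds_zero_nat
  -- the quotient functions
  set c : ℕ → (Fin d → ℝ) → ℝ :=
    fun n x => (‖ψ₁ x‖ + δ n) / (‖ψ₀ x‖ + δ n) with hcdef
  have hcpos : ∀ n x, 0 < c n x := by
    intro n x
    apply div_pos <;> positivity
  have hccont : ∀ n, Continuous (c n) := by
    intro n
    apply Continuous.div
    · exact (continuous_norm.comp hψ₁).add continuous_const
    · exact (continuous_norm.comp hψ₀).add continuous_const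
    · intro x
      positivity
  -- the error functions
  set G : ℕ → (Fin d → ℝ) → ℝ :=
    fun n x => ‖(c n x : ℂ) * ψ₀ x - ψ₁ x‖ ^ 2 with hGdef
  have hGcont : ∀ n, Continuous (G n) := by
    intro n
    apply Continuous.pow
    exact continuous_norm.comp
      ((Complex.continuous_ofReal.comp (hccont n)).mul hψ₀ |>.sub hψ₁)
  -- the dominating bound
  set bound : (Fin d → ℝ) → ℝ := fun x => (2 * ‖ψ₁ x‖ + 1) ^ 2 with hbounddef
  have hboundcont : Continuous bound := by
    apply Continuous.pow
    exact (continuous_const.mul (continuous_norm.comp hψ₁)).add continuous_const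
  have hboxcompact : IsCompact box := isCompact_univ_pi fun _ => isCompact_Icc
  have hbound_int : MeasureTheory.IntegrableOn bound box :=
    hboundcont.continuousOn.integrableOn_compact hboxcompact
  -- the bound estimate
  have hGbound : ∀ n x, ‖G n x‖ ≤ bound x := by
    intro n x
    have h1 : ‖(c n x : ℂ) * ψ₀ x - ψ₁ x‖
        ≤ c n x * ‖ψ₀ x‖ + ‖ψ₁ x‖ := by
      calc ‖(c n x : ℂ) * ψ₀ x - ψ₁ x‖
          ≤ ‖(c n x : ℂ) * ψ₀ x‖ + ‖ψ₁ x‖ := by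
            exact (norm_sub_le _ _).trans_eq rfl
        _ = c n x * ‖ψ₀ x‖ + ‖ψ₁ x‖ := by
            rw [norm_mul, Complex.norm_real, Real.norm_eq_abs, abs_of_pos (hcpos n x)]
    have h2 : c n x * ‖ψ₀ x‖ ≤ ‖ψ₁ x‖ + δ n := by
      rw [hcdef]
      rw [div_mul_eq_mul_div, div_le_iff₀ (by positivity)]
      have := norm_nonneg (ψ₁ x)
      have := norm_nonneg (ψ₀ x)
      have := (hδpos n).le
      nlinarith
    have h3 : ‖(c n x : ℂ) * ψ₀ x - ψ₁ x‖ ≤ 2 * ‖ψ₁ x‖ + 1 := by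
      have := hδle n
      linarith
    rw [hGdef]
    simp only [Real.norm_eq_abs]
    rw [abs_of_nonneg (by positivity)]
    have hnn : (0 : ℝ) ≤ ‖(c n x : ℂ) * ψ₀ x - ψ₁ x‖ := norm_nonneg _
    exact pow_le_pow_left₀ hnn h3 2
  -- pointwise convergence
  have hGlim : ∀ x, Filter.Tendsto (fun n => G n x) Filter.atTop (nhds 0) := by
    intro x
    by_cases hx : ψ₀ x = 0
    · have hx1 : ψ₁ x = 0 := by
        have : x ∈ {x : Fin d → ℝ | ψ₀ x = 0} := hx
        rw [hzero] at this
        exact this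
      have : ∀ n, G n x = 0 := by
        intro n
        simp [hGdef, hx, hx1]
      simpa [this] using tendsto_const_nhds (α := ℝ) (f := Filter.atTop (α := ℕ))
    · obtain ⟨r, hr, hr1⟩ := harg x hx
      have hb : 0 < ‖ψ₀ x‖ := by
        simpa [norm_pos_iff] using hx
      have ha : ‖ψ₁ x‖ = r * ‖ψ₀ x‖ := by
        rw [hr1, norm_mul, Complex.norm_real, Real.norm_eq_abs, abs_of_pos hr]
      have hclim : Filter.Tendsto (fun n => c n x) Filter.atTop (nhds r) := by
        have h1 : Filter.Tendsto (fun n => ‖ψ₁ x‖ + δ n) Filter.atTop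
            (nhds (‖ψ₁ x‖)) := by
          simpa using tendsto_const_nhds.add hδlim
        have h2 : Filter.Tendsto (fun n => ‖ψ₀ x‖ + δ n) Filter.atTop
            (nhds (‖ψ₀ x‖)) := by
          simpa using tendsto_const_nhds.add hδlim
        have := h1.div h2 hb.ne'
        convert this using 2
        · rfl
        · rw [ha]
          field_simp
      have hcont : Continuous fun t : ℝ => ‖(t : ℂ) * ψ₀ x - ψ₁ x‖ ^ 2 := by
        apply Continuous.pow
        exact continuous_norm.comp
          ((Complex.continuous_ofReal.mul continuous_const).sub continuous_const)
      have := (hcont.tendsto r).comp hclim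
      have heval : ‖(r : ℂ) * ψ₀ x - ψ₁ x‖ ^ 2 = 0 := by
        rw [hr1]; simp
      simpa [Function.comp_def, hGdef, heval] using this
  -- dominated convergence
  have hμ := MeasureTheory.Measure.restrict_apply_univ (μ := (MeasureTheory.volume : MeasureTheory.Measure (Fin d → ℝ))) box
  have hDCT : Filter.Tendsto (fun n => ∫ x in box, G n x) Filter.atTop (nhds 0) := by
    have h0 : (0 : ℝ) = ∫ _ in box, (0 : ℝ) := by simp
    rw [h0]
    apply MeasureTheory.tendsto_integral_of_dominated_convergence bound
    · intro n
      exact ((hGcont n).aestronglyMeasurable).restrict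
    · exact hbound_int
    · intro n
      exact Filter.Eventually.of_forall fun x => hGbound n x
    · exact Filter.Eventually.of_forall fun x => hGlim x
  -- pick n with small integral
  have hε2 : 0 < ε ^ 2 := by positivity
  obtain ⟨n, hn⟩ := (hDCT.eventually (gt_mem_nhds hε2)).exists
  -- construct φ
  refine ⟨fun x => Real.log (c n x), ?_, ?_, ?_⟩
  · exact (hccont n).log fun x => (hcpos n x).ne'
  · intro x i
    simp only [hcdef, hper₀ x i, hper₁ x i]
  · have hkey : ∀ x, Complex.exp ((Real.log (c n x) : ℂ)) = ((c n x : ℝ) : ℂ) := by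
      intro x
      rw [← Complex.ofReal_exp, Real.exp_log (hcpos n x)]
    have hint_eq : (∫ x in box,
        ‖Complex.exp ((Real.log (c n x) : ℂ)) * ψ₀ x - ψ₁ x‖ ^ 2)
        = ∫ x in box, G n x := by
      apply MeasureTheory.integral_congr_ae
      apply Filter.Eventually.of_forall
      intro x
      simp only [hGdef, hkey]
    have hnonneg : (0 : ℝ) ≤ ∫ x in box, G n x := by
      apply MeasureTheory.integral_nonneg
      intro x
      positivity
    calc (∫ x in box,
        ‖Complex.exp ((Real.log (c n x) : ℂ)) * ψ₀ x - ψ₁ x‖ ^ 2) ^ ((1:ℝ)/2)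
        = (∫ x in box, G n x) ^ ((1:ℝ)/2) := by rw [hint_eq]
      _ = Real.sqrt (∫ x in box, G n x) := by rw [Real.sqrt_eq_rpow]
      _ < ε := by
          rw [Real.sqrt_lt' hε]
          exact hn
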